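/- Diffusion coefficient asymptotics for the rescaled logistic branching process. Under the standing assumptions, for every compact set K ⊆ ℝ, writing x̂ := μ_N + x σ_N, one has lim_{N→∞} sup_{x ∈ E_N ∩ K, x̂ ≥ 1} | (1/(2 σ_N²)) ( v² h_N(x̂) x̂ + ρ_N^{−1} (d_N x̂ + c_N x̂ (x̂ − 1)) ) − (v² + π̄)/2 | = 0; that is, the normalised second-moment jump rate of the time-rescaled, centred and normalised logistic branching process converges to the Ornstein–Uhlenbeck diffusion coefficient (v² + π̄)/2, uniformly on compact sets intersected with the lattice E_N. -/

import Mathlib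

open Filter

private lemma aux_id (v2 πb H kk d ρ c μ : ℝ) (hρ : ρ ≠ 0) (hμ : μ ≠ 0)
    (hcm : c * μ = πb * ρ) :
    1 / (2 * μ) * (v2 * H * kk + ρ⁻¹ * (d * kk + c * kk * (kk - 1))) - (v2 + πb) / 2
      = v2 / 2 * (H * (kk / μ) - 1) + d / ρ * (kk / μ) / 2
        + πb / 2 * ((kk / μ) * (kk / μ) - (kk / μ) * μ⁻¹ - 1) := by
  have hc' : c = πb * ρ / μ := (eq_div_iff hμ).mpr hcm
  subst hc'
  field_simp
  ring

/-- Diffusion coefficient asymptotics for the rescaled logistic branching process: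
the normalised second-moment jump rate converges to the Ornstein–Uhlenbeck diffusion
coefficient `(v² + π̄)/2`, uniformly on compact sets intersected with the lattice
`E_N` (states `x̂ ≥ 1`). -/
theorem logistic_diffusion_asymptotics
    (π : ℕ → ℝ) (hπ0 : π 0 = 0) (hπnn : ∀ j, 0 ≤ π j) (hπsum : ∑' j : ℕ, π j = 1)
    (πbar v2 : ℝ)
    (hmean : HasSum (fun j : ℕ => (j : ℝ) * π j) πbar)
    (hsecond : HasSum (fun j : ℕ => (j : ℝ) ^ 2 * π j) v2)
    (hthird : Summable (fun j : ℕ => (j : ℝ) ^ 3 * π j))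
    (ρ d c : ℕ → ℝ) (h : ℕ → ℕ → ℝ)
    (hρ : ∀ N, 0 < ρ N) (hd : ∀ N, 0 ≤ d N) (hc : ∀ N, 0 < c N)
    (hhpos : ∀ N k, 0 < h N k) (hhbdd : ∀ N, ∃ M : ℝ, ∀ k, h N k ≤ M)
    (μ σ : ℕ → ℝ)
    (hμ : ∀ N, μ N = πbar * ρ N / c N) (hσ : ∀ N, σ N = Real.sqrt (μ N))
    (hρ0 : Tendsto ρ atTop (nhds 0))
    (hρc : Tendsto (fun N => ρ N / c N) atTop atTop)
    (hdc : Tendsto (fun N => d N / c N) atTop (nhds 0))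
    (hh : ∃ C : ℝ, ∃ ε : ℕ → ℝ, Tendsto ε atTop (nhds 0) ∧
      ∀ N k, |h N k - 1| ≤ C * ε N * |(k : ℝ) - μ N| / μ N)
    (K : Set ℝ) (hK : IsCompact K) :
    Tendsto (fun N : ℕ =>
      sSup ((fun k : ℕ =>
        |(1 / (2 * (σ N) ^ 2)) * (v2 * h N k * (k : ℝ)
            + (ρ N)⁻¹ * (d N * (k : ℝ) + c N * (k : ℝ) * ((k : ℝ) - 1)))
          - (v2 + πbar) / 2|)
        '' {k : ℕ | 1 ≤ k ∧ ((k : ℝ) - μ N) / σ N ∈ K}))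
      atTop (nhds 0) := by
  obtain ⟨C, ε, hε0, hεbd⟩ := hh
  -- πbar ≥ 1 and v2 ≥ 0
  have hπle : ∀ j : ℕ, π j ≤ (j : ℝ) * π j := by
    intro j
    cases j with
    | zero => simp [hπ0]
    | succ n =>
        have := hπnn (n + 1)
        have : (1 : ℝ) ≤ ((n + 1 : ℕ) : ℝ) := by exact_mod_cast Nat.one_le_iff_ne_zero.mpr (Nat.succ_ne_zero n)
        nlinarith [hπnn (n + 1)]
  have hπsummable : Summable π :=
    Summable.of_nonneg_of_le hπnn hπle hmean.summable
  have hπhs : HasSum π 1 := by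
    have := hπsummable.hasSum
    rwa [hπsum] at this
  have hπbar1 : (1 : ℝ) ≤ πbar := hasSum_le hπle hπhs hmean
  have hπbar0 : (0 : ℝ) < πbar := lt_of_lt_of_le one_pos hπbar1
  have hv2 : (0 : ℝ) ≤ v2 :=
    hasSum_le (fun j => mul_nonneg (by positivity) (hπnn j)) hasSum_zero hsecond
  -- radius of K
  obtain ⟨r, hr⟩ := hK.isBounded.subset_closedBall 0
  set R : ℝ := max r 0 with hRdef
  have hR0 : (0 : ℝ) ≤ R := le_max_right r 0
  have hxR : ∀ x ∈ K, |x| ≤ R := by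
    intro x hx
    have := hr hx
    rw [Metric.mem_closedBall, Real.dist_eq, sub_zero] at this
    exact this.trans (le_max_left r 0)
  -- limits
  have hμtop : Tendsto μ atTop atTop := by
    refine Tendsto.congr (fun N => ?_) (hρc.const_mul_atTop hπbar0)
    rw [hμ N]; ring
  have hsqrtTop : Tendsto Real.sqrt atTop atTop := by
    refine tendsto_atTop_atTop.mpr fun b => ⟨b ^ 2 + 1, fun a ha => ?_⟩
    have ha0 : (0 : ℝ) ≤ a := by nlinarith [sq_nonneg b]
    nlinarith [Real.sq_sqrt ha0, Real.sqrt_nonneg a]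
  have hσtop : Tendsto σ atTop atTop := by
    refine Tendsto.congr (fun N => (hσ N).symm) (hsqrtTop.comp hμtop)
  have hA : Tendsto (fun N => (σ N)⁻¹) atTop (nhds 0) := hσtop.inv_tendsto_atTop
  have hM : Tendsto (fun N => (μ N)⁻¹) atTop (nhds 0) := hμtop.inv_tendsto_atTop
  have hE : Tendsto (fun N => |C * ε N|) atTop (nhds 0) := by
    have := ((hε0.const_mul C).abs)
    simpa using this
  have hcρ : Tendsto (fun N => c N / ρ N) atTop (nhds 0) := by
    refine Tendsto.congr (fun N => ?_) hρc.inv_tendsto_atTop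
    simp [inv_div]
  have hb : Tendsto (fun N => d N / ρ N) atTop (nhds 0) := by
    have h1 : Tendsto (fun N => d N / c N * (c N / ρ N)) atTop (nhds (0 * 0)) :=
      hdc.mul hcρ
    rw [mul_zero] at h1
    refine Tendsto.congr (fun N => ?_) h1
    field_simp
    rw [mul_comm (c N) (ρ N)]
    exact mul_div_mul_right _ _ (hc N).ne'
  -- the bound sequence
  set B : ℕ → ℝ := fun N =>
    v2 / 2 * (|C * ε N| * R * (σ N)⁻¹ * (1 + R * (σ N)⁻¹) + R * (σ N)⁻¹)
      + d N / ρ N * (1 + R * (σ N)⁻¹) / 2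
      + πbar / 2 * (R * (σ N)⁻¹ * (2 + R * (σ N)⁻¹) + (1 + R * (σ N)⁻¹) * (μ N)⁻¹)
    with hBdef
  have hB0 : Tendsto B atTop (nhds 0) := by
    have hcont : Continuous (fun p : ℝ × ℝ × ℝ × ℝ =>
        v2 / 2 * (p.1 * R * p.2.1 * (1 + R * p.2.1) + R * p.2.1)
          + p.2.2.1 * (1 + R * p.2.1) / 2
          + πbar / 2 * (R * p.2.1 * (2 + R * p.2.1) + (1 + R * p.2.1) * p.2.2.2)) := by
      fun_prop
    have key := hcont.tendsto' ((0 : ℝ), (0 : ℝ), (0 : ℝ), (0 : ℝ)) 0 (by norm_num)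
    have h2 := key.comp (hE.prodMk_nhds (hA.prodMk_nhds (hb.prodMk_nhds hM)))
    rw [hBdef]
    simpa [Function.comp_def] using h2
  -- squeeze
  refine tendsto_of_tendsto_of_tendsto_of_le_of_le' tendsto_const_nhds hB0
    (Eventually.of_forall fun N => Real.sSup_nonneg fun y hy => ?_) ?_
  · obtain ⟨k, -, rfl⟩ := hy
    exact abs_nonneg _
  · filter_upwards [hμtop.eventually_ge_atTop 1] with N hμ1
    have hμpos : (0 : ℝ) < μ N := lt_of_lt_of_le one_pos hμ1
    have hσ1 : (1 : ℝ) ≤ σ N := by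
      rw [hσ N]
      calc (1 : ℝ) = Real.sqrt 1 := Real.sqrt_one.symm
        _ ≤ Real.sqrt (μ N) := Real.sqrt_le_sqrt hμ1
    have hσpos : (0 : ℝ) < σ N := lt_of_lt_of_le one_pos hσ1
    have hσsq : σ N ^ 2 = μ N := by rw [hσ N]; exact Real.sq_sqrt hμpos.le
    have ha0 : (0 : ℝ) ≤ (σ N)⁻¹ := by positivity
    have hm0 : (0 : ℝ) ≤ (μ N)⁻¹ := by positivity
    have he0 : (0 : ℝ) ≤ |C * ε N| := abs_nonneg _
    have hb0 : (0 : ℝ) ≤ d N / ρ N := div_nonneg (hd N) (hρ N).le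
    have hBnn : 0 ≤ B N := by
      simp only [hBdef]
      have h1 : (0:ℝ) ≤ |C * ε N| * R * (σ N)⁻¹ * (1 + R * (σ N)⁻¹) + R * (σ N)⁻¹ := by
        positivity
      have h2 : (0:ℝ) ≤ 1 + R * (σ N)⁻¹ := by positivity
      have h3 : (0:ℝ) ≤ R * (σ N)⁻¹ * (2 + R * (σ N)⁻¹) + (1 + R * (σ N)⁻¹) * (μ N)⁻¹ := by
        positivity
      have := mul_nonneg (by linarith : (0:ℝ) ≤ v2 / 2) h1
      have := div_nonneg (mul_nonneg hb0 h2) (by norm_num : (0:ℝ) ≤ (2:ℝ))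
      have := mul_nonneg (by linarith : (0:ℝ) ≤ πbar / 2) h3
      linarith
    refine Real.sSup_le ?_ hBnn
    rintro y ⟨k, ⟨hk1, hkK⟩, rfl⟩
    -- the pointwise bound
    have hcm : c N * μ N = πbar * ρ N := by
      rw [hμ N]
      field_simp
      exact mul_div_cancel_left₀ _ (hc N).ne'
    have hid := aux_id v2 πbar (h N k) (k : ℝ) (d N) (ρ N) (c N) (μ N)
      (hρ N).ne' hμpos.ne' hcm
    -- basic facts about t = k/μ
    have hxk : |(k : ℝ) - μ N| ≤ R * σ N := by
      have h1 := hxR _ hkK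
      rw [abs_div, abs_of_pos hσpos, div_le_iff₀ hσpos] at h1
      exact h1
    have ht1 : |(k : ℝ) / μ N - 1| ≤ R * (σ N)⁻¹ := by
      have heq : (k : ℝ) / μ N - 1 = ((k : ℝ) - μ N) / μ N := by field_simp
      rw [heq, abs_div, abs_of_pos hμpos]
      calc |(k : ℝ) - μ N| / μ N ≤ R * σ N / μ N := by gcongr
        _ = R * (σ N)⁻¹ := by
          rw [← hσsq]
          field_simp
    have ht0 : (0 : ℝ) ≤ (k : ℝ) / μ N := by positivity
    have htu : (k : ℝ) / μ N ≤ 1 + R * (σ N)⁻¹ := by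
      have := (abs_le.mp ht1).2
      linarith
    -- bound on |h - 1|
    have hh1 : |h N k - 1| ≤ |C * ε N| * R * (σ N)⁻¹ := by
      have h1 := hεbd N k
      have hs0 : (0 : ℝ) ≤ |(k : ℝ) - μ N| / μ N := div_nonneg (abs_nonneg _) hμpos.le
      have hsle : |(k : ℝ) - μ N| / μ N ≤ R * (σ N)⁻¹ := by
        calc |(k : ℝ) - μ N| / μ N ≤ R * σ N / μ N := by gcongr
          _ = R * (σ N)⁻¹ := by rw [← hσsq]; field_simp
      have hrw : C * ε N * |(k : ℝ) - μ N| / μ N = C * ε N * (|(k : ℝ) - μ N| / μ N) := by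
        ring
      rw [hrw] at h1
      calc |h N k - 1| ≤ C * ε N * (|(k : ℝ) - μ N| / μ N) := h1
        _ ≤ |C * ε N| * (|(k : ℝ) - μ N| / μ N) :=
            mul_le_mul_of_nonneg_right (le_abs_self _) hs0
        _ ≤ |C * ε N| * (R * (σ N)⁻¹) := mul_le_mul_of_nonneg_left hsle he0
        _ = |C * ε N| * R * (σ N)⁻¹ := by ring
    -- key intermediate bounds
    have H1 : |h N k * ((k : ℝ) / μ N) - 1|
        ≤ |C * ε N| * R * (σ N)⁻¹ * (1 + R * (σ N)⁻¹) + R * (σ N)⁻¹ := by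
      calc |h N k * ((k : ℝ) / μ N) - 1|
          = |(h N k - 1) * ((k : ℝ) / μ N) + ((k : ℝ) / μ N - 1)| := by ring_nf
        _ ≤ |(h N k - 1) * ((k : ℝ) / μ N)| + |(k : ℝ) / μ N - 1| := abs_add_le _ _
        _ = |h N k - 1| * ((k : ℝ) / μ N) + |(k : ℝ) / μ N - 1| := by
            rw [abs_mul, abs_of_nonneg ht0]
        _ ≤ |C * ε N| * R * (σ N)⁻¹ * (1 + R * (σ N)⁻¹) + R * (σ N)⁻¹ := by
            have e1 := mul_le_mul hh1 htu ht0 (mul_nonneg (mul_nonneg he0 hR0) ha0)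
            linarith
    have H3 : |((k : ℝ) / μ N) * ((k : ℝ) / μ N) - ((k : ℝ) / μ N) * (μ N)⁻¹ - 1|
        ≤ R * (σ N)⁻¹ * (2 + R * (σ N)⁻¹) + (1 + R * (σ N)⁻¹) * (μ N)⁻¹ := by
      calc |((k : ℝ) / μ N) * ((k : ℝ) / μ N) - ((k : ℝ) / μ N) * (μ N)⁻¹ - 1|
          = |((k : ℝ) / μ N - 1) * ((k : ℝ) / μ N + 1) + (-((k : ℝ) / μ N)) * (μ N)⁻¹| := by
            ring_nf
        _ ≤ |((k : ℝ) / μ N - 1) * ((k : ℝ) / μ N + 1)| + |(-((k : ℝ) / μ N)) * (μ N)⁻¹| :=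
            abs_add_le _ _
        _ = |(k : ℝ) / μ N - 1| * ((k : ℝ) / μ N + 1) + ((k : ℝ) / μ N) * (μ N)⁻¹ := by
            rw [abs_mul, abs_mul, abs_of_nonneg (by linarith : (0:ℝ) ≤ (k : ℝ) / μ N + 1),
              abs_neg, abs_of_nonneg ht0, abs_of_nonneg hm0]
        _ ≤ R * (σ N)⁻¹ * (2 + R * (σ N)⁻¹) + (1 + R * (σ N)⁻¹) * (μ N)⁻¹ := by
            have e1 : |(k : ℝ) / μ N - 1| * ((k : ℝ) / μ N + 1)
                ≤ R * (σ N)⁻¹ * (2 + R * (σ N)⁻¹) :=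
              mul_le_mul ht1 (by linarith) (by linarith) (mul_nonneg hR0 ha0)
            have e2 : ((k : ℝ) / μ N) * (μ N)⁻¹ ≤ (1 + R * (σ N)⁻¹) * (μ N)⁻¹ :=
              mul_le_mul_of_nonneg_right htu hm0
            linarith
    -- put it together
    show |1 / (2 * σ N ^ 2) * (v2 * h N k * (k : ℝ)
        + (ρ N)⁻¹ * (d N * (k : ℝ) + c N * (k : ℝ) * ((k : ℝ) - 1)))
        - (v2 + πbar) / 2| ≤ B N
    rw [hσsq, hid]
    calc |v2 / 2 * (h N k * ((k : ℝ) / μ N) - 1) + d N / ρ N * ((k : ℝ) / μ N) / 2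
          + πbar / 2 * (((k : ℝ) / μ N) * ((k : ℝ) / μ N) - ((k : ℝ) / μ N) * (μ N)⁻¹ - 1)|
        ≤ |v2 / 2 * (h N k * ((k : ℝ) / μ N) - 1)| + |d N / ρ N * ((k : ℝ) / μ N) / 2|
          + |πbar / 2 * (((k : ℝ) / μ N) * ((k : ℝ) / μ N) - ((k : ℝ) / μ N) * (μ N)⁻¹ - 1)| :=
          abs_add_three _ _ _
      _ = v2 / 2 * |h N k * ((k : ℝ) / μ N) - 1| + d N / ρ N * ((k : ℝ) / μ N) / 2
          + πbar / 2 * |((k : ℝ) / μ N) * ((k : ℝ) / μ N) - ((k : ℝ) / μ N) * (μ N)⁻¹ - 1| := by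
          rw [abs_mul, abs_of_nonneg (by linarith : (0:ℝ) ≤ v2 / 2),
            abs_of_nonneg (by positivity : (0:ℝ) ≤ d N / ρ N * ((k : ℝ) / μ N) / 2),
            abs_mul, abs_of_nonneg (by linarith : (0:ℝ) ≤ πbar / 2)]
      _ ≤ B N := by
          simp only [hBdef]
          have hA2 : d N / ρ N * ((k : ℝ) / μ N) / 2 ≤ d N / ρ N * (1 + R * (σ N)⁻¹) / 2 := by
            gcongr
          have := mul_le_mul_of_nonneg_left H1 (by linarith : (0:ℝ) ≤ v2 / 2)
          have := mul_le_mul_of_nonneg_left H3 (by linarith : (0:ℝ) ≤ πbar / 2)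
          linarith
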